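/- Let (V,c) be a metric with root r, rewards π ≥ 0, and budget B; fix w with c_{rw} ≤ B/2, and let V̄_w = {u : c_{ru} ≤ c_{rw}}. Let C* be a cycle through r and w contained in V̄_w with c(C*) ≤ B, and let Y be any value satisfying Y ≤ z for every feasible objective value z of the prize-collecting walks LP on the bidirection of the complete graph on V̄_w with penalties λπ. Then π(V(C*)) ≤ 2π(V̄_w) − π_r − π_w + (B − 2Y)/λ for every λ > 0. -/

import Mathlib

open Finset

namespace PCW

set_option linter.unusedSectionVars false

variable {V : Type*} [Fintype V] [DecidableEq V]

def edges (P : List V) : List (V × V) := P.zip P.tail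

def costsum (c : V → V → ℝ) (E : List (V × V)) : ℝ :=
  (E.map fun q => c q.1 q.2).sum

@[simp] lemma edges_nil : edges ([] : List V) = [] := rfl
@[simp] lemma edges_single (a : V) : edges [a] = [] := rfl
@[simp] lemma edges_cons_cons (a b : V) (t : List V) :
    edges (a :: b :: t) = (a, b) :: edges (b :: t) := rfl

@[simp] lemma costsum_nil (c : V → V → ℝ) : costsum c [] = 0 := rfl
@[simp] lemma costsum_cons (c : V → V → ℝ) (q : V × V) (E : List (V × V)) :
    costsum c (q :: E) = c q.1 q.2 + costsum c E := rfl
@[simp] lemma costsum_append (c : V → V → ℝ) (E F : List (V × V)) :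
    costsum c (E ++ F) = costsum c E + costsum c F := by
  simp [costsum]

noncomputable def flow : List V → V → V → ℝ
  | a :: b :: t => fun u v => (if u = a ∧ v = b then (2:ℝ)⁻¹ else 0) + flow (b :: t) u v
  | _ => fun _ _ => 0

@[simp] lemma flow_nil (u v : V) : flow ([] : List V) u v = 0 := rfl
@[simp] lemma flow_single (a u v : V) : flow [a] u v = 0 := rfl
lemma flow_cons_cons (a b : V) (t : List V) (u v : V) :
    flow (a :: b :: t) u v
      = (if u = a ∧ v = b then (2:ℝ)⁻¹ else 0) + flow (b :: t) u v := rfl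

lemma flow_nonneg : ∀ (P : List V) (u v : V), 0 ≤ flow P u v
  | [], _, _ => le_refl 0
  | [_], _, _ => le_refl 0
  | _ :: b :: t, u, v =>
    add_nonneg (by positivity) (flow_nonneg (b :: t) u v)

lemma flow_le_cons (a b : V) (t : List V) (u v : V) :
    flow (b :: t) u v ≤ flow (a :: b :: t) u v := by
  rw [flow_cons_cons]
  have : (0:ℝ) ≤ (if u = a ∧ v = b then (2:ℝ)⁻¹ else 0) := by positivity
  linarith

lemma flow_support : ∀ (P : List V), P.Nodup → ∀ u v : V,
    ¬(u ∈ P ∧ v ∈ P ∧ u ≠ v) → flow P u v = 0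
  | [], _, _, _, _ => rfl
  | [_], _, _, _, _ => rfl
  | a :: b :: t, hnd, u, v, h => by
    rw [flow_cons_cons, flow_support (b :: t) hnd.of_cons u v, if_neg, add_zero]
    · rintro ⟨rfl, rfl⟩
      exact h ⟨List.mem_cons_self, List.mem_cons_of_mem _ (List.mem_cons_self),
        fun hv => (List.nodup_cons.1 hnd).1 (hv ▸ List.mem_cons_self)⟩
    · rintro ⟨h1, h2, h3⟩
      exact h ⟨List.mem_cons_of_mem _ h1, List.mem_cons_of_mem _ h2, h3⟩

lemma sum_flow_out_cons (a b : V) (t : List V) (v : V) :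
    ∑ u, flow (a :: b :: t) v u
      = (if v = a then (2:ℝ)⁻¹ else 0) + ∑ u, flow (b :: t) v u := by
  simp only [flow_cons_cons, Finset.sum_add_distrib]
  congr 1
  by_cases h : v = a <;> simp [h]

lemma sum_flow_in_cons (a b : V) (t : List V) (v : V) :
    ∑ u, flow (a :: b :: t) u v
      = (if v = b then (2:ℝ)⁻¹ else 0) + ∑ u, flow (b :: t) u v := by
  simp only [flow_cons_cons, Finset.sum_add_distrib]
  congr 1
  by_cases h : v = b <;> simp [h, and_comm]

lemma sum_flow_out_zero : ∀ (P : List V) (v : V), v ∉ P → ∑ u, flow P v u = 0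
  | [], _, _ => by simp
  | [a], _, _ => by simp
  | a :: b :: t, v, hv => by
    rw [sum_flow_out_cons, if_neg (fun h => hv (by rw [h]; exact List.mem_cons_self)),
      sum_flow_out_zero (b :: t) v (fun h => hv (List.mem_cons_of_mem _ h)), zero_add]

lemma sum_flow_nonneg (P : List V) (v : V) : 0 ≤ ∑ u, flow P u v :=
  Finset.sum_nonneg fun u _ => flow_nonneg P u v

lemma sum_flow_out_head_le : ∀ (t : List V) (b : V), b ∉ t →
    ∑ u, flow (b :: t) b u ≤ (2:ℝ)⁻¹
  | [], _, _ => by simp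
  | c :: t', b, hb => by
    rw [sum_flow_out_cons, if_pos rfl, sum_flow_out_zero (c :: t') b hb]
    norm_num

lemma flow_conservation : ∀ (t : List V) (a v : V), (a :: t).Nodup → v ≠ a →
    ∑ u, flow (a :: t) v u ≤ ∑ u, flow (a :: t) u v
  | [], a, v, _, _ => by simp
  | b :: t', a, v, hnd, hva => by
    rw [sum_flow_out_cons, if_neg hva, zero_add, sum_flow_in_cons]
    by_cases hvb : v = b
    · subst hvb
      have hb : v ∉ t' := (List.nodup_cons.1 hnd.of_cons).1
      have h1 := sum_flow_out_head_le t' v hb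
      have h2 := sum_flow_nonneg (v :: t') v
      split_ifs with h
      · linarith
      · exact absurd rfl h
    · have := flow_conservation t' b v hnd.of_cons hvb
      have h0 : (0:ℝ) ≤ (if v = b then (2:ℝ)⁻¹ else 0) := by positivity
      linarith

lemma flow_cut : ∀ (t : List V) (a : V) (S : Finset V), a ∉ S →
    ∀ v ∈ (a :: t), v ∈ S → (2:ℝ)⁻¹ ≤ ∑ u ∈ Sᶜ, ∑ z ∈ S, flow (a :: t) u z
  | [], a, S, haS, v, hv, hvS => by
    simp only [List.mem_singleton] at hv
    exact absurd (hv ▸ hvS) haS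
  | b :: t', a, S, haS, v, hv, hvS => by
    have hva : v ≠ a := fun h => haS (h ▸ hvS)
    have hvt : v ∈ b :: t' := by
      rcases List.mem_cons.1 hv with h | h
      · exact absurd h hva
      · exact h
    by_cases hb : b ∈ S
    · calc (2:ℝ)⁻¹ ≤ flow (a :: b :: t') a b := by
            rw [flow_cons_cons, if_pos ⟨rfl, rfl⟩]
            have := flow_nonneg (b :: t') a b
            linarith
        _ ≤ ∑ z ∈ S, flow (a :: b :: t') a z :=
            Finset.single_le_sum (fun z _ => flow_nonneg _ a z) hb
        _ ≤ ∑ u ∈ Sᶜ, ∑ z ∈ S, flow (a :: b :: t') u z :=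
            Finset.single_le_sum
              (fun u _ => Finset.sum_nonneg fun z _ => flow_nonneg _ u z)
              (Finset.mem_compl.2 haS)
    · calc (2:ℝ)⁻¹ ≤ ∑ u ∈ Sᶜ, ∑ z ∈ S, flow (b :: t') u z :=
            flow_cut t' b S hb v hvt hvS
        _ ≤ ∑ u ∈ Sᶜ, ∑ z ∈ S, flow (a :: b :: t') u z :=
            Finset.sum_le_sum fun u _ => Finset.sum_le_sum fun z _ =>
              flow_le_cons a b t' u z

lemma flow_cost (c : V → V → ℝ) : ∀ (P : List V),
    ∑ u, ∑ v, c u v * flow P u v = (2:ℝ)⁻¹ * costsum c (edges P)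
  | [] => by simp
  | [a] => by simp
  | a :: b :: t => by
    have IH := flow_cost c (b :: t)
    simp only [flow_cons_cons, mul_add, Finset.sum_add_distrib, IH,
      edges_cons_cons, costsum_cons]
    have : ∀ u, ∑ v, c u v * (if u = a ∧ v = b then (2:ℝ)⁻¹ else 0)
        = if u = a then c u b * (2:ℝ)⁻¹ else 0 := by
      intro u
      by_cases h : u = a <;> simp [h]
    rw [Finset.sum_congr rfl (fun u _ => this u)]
    simp
    ring

lemma edges_append : ∀ (A : List V) (m : V) (B : List V),
    edges (A ++ m :: B) = edges (A ++ [m]) ++ edges (m :: B)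
  | [], m, B => by simp
  | [a], m, B => by simp
  | a :: b :: A', m, B => by
    have IH := edges_append (b :: A') m B
    simp only [List.cons_append, edges_cons_cons] at IH ⊢
    rw [IH]

lemma costsum_edges_concat (c : V → V → ℝ) : ∀ (l : List V) (z : V),
    costsum c (edges (l ++ [z]))
      = costsum c (edges l) + (match l.getLast? with
          | some m => c m z
          | none => 0)
  | [], z => by simp
  | [a], z => by simp
  | a :: b :: t, z => by
    have IH := costsum_edges_concat c (b :: t) z
    simp only [List.cons_append, edges_cons_cons, costsum_cons] at IH ⊢
    rw [IH, List.getLast?_cons_cons]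
    ring

lemma costsum_edges_reverse (c : V → V → ℝ) (hsym : ∀ u v, c u v = c v u) :
    ∀ (l : List V), costsum c (edges l.reverse) = costsum c (edges l)
  | [] => by simp
  | [a] => by simp
  | a :: b :: t => by
    have IH := costsum_edges_reverse c hsym (b :: t)
    have h1 : (a :: b :: t).reverse = (b :: t).reverse ++ [a] := by simp
    rw [h1, costsum_edges_concat, IH]
    have h2 : ((b :: t).reverse).getLast? = some b := by
      rw [List.getLast?_reverse]
      rfl
    rw [h2]
    simp only [edges_cons_cons, costsum_cons]
    rw [hsym b a]
    ring

lemma zip_concat_eq_edges : ∀ (t : List V) (a z : V),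
    (a :: t).zip (t ++ [z]) = edges (a :: t ++ [z])
  | [], a, z => rfl
  | b :: t', a, z => by
    have IH := zip_concat_eq_edges t' b z
    simp only [List.cons_append, edges_cons_cons] at IH ⊢
    rw [List.zip_cons_cons, IH]

lemma zip_rotate_rotate (l : List V) (n : ℕ) :
    (l.rotate n).zip (l.rotate (n + 1)) = (l.zip (l.rotate 1)).rotate n := by
  apply List.ext_getElem
  · simp
  · intro i h1 h2
    have hlen : (l.zip (l.rotate 1)).length = l.length := by simp
    have hi : i < l.length := by simpa [hlen] using h2
    rw [List.getElem_rotate]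
    simp only [List.getElem_zip, List.getElem_rotate, hlen]
    have h3 : (i + (n + 1)) % l.length = ((i + n) % l.length + 1) % l.length := by
      rw [Nat.mod_add_mod, Nat.add_assoc]
    simp only [h3]

lemma rotate_cycle_cost (c : V → V → ℝ) (l : List V) (n : ℕ) :
    (((l.rotate n).zip ((l.rotate n).rotate 1)).map fun q => c q.1 q.2).sum
      = ((l.zip (l.rotate 1)).map fun q => c q.1 q.2).sum := by
  rw [List.rotate_rotate, zip_rotate_rotate]
  exact (((l.zip (l.rotate 1)).rotate_perm n).map _).sum_eq


end PCW

open Finset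

theorem cycle_orienteering_upper_bound
    {V : Type*} [Fintype V] [DecidableEq V]
    (c : V → V → ℝ) (π : V → ℝ) (r w : V) (B lam Y : ℝ)
    (hsym : ∀ u v, c u v = c v u) (hc : ∀ u v, 0 ≤ c u v)
    (hπ : ∀ v, 0 ≤ π v) (hlam : 0 < lam)
    (hrw : r ≠ w) (hrwB : c r w ≤ B / 2)
    (L : List V) (hLnd : L.Nodup) (hrL : r ∈ L) (hwL : w ∈ L)
    (hLVw : ∀ v ∈ L, c r v ≤ c r w)
    (hLcost : ((L.zip (L.rotate 1)).map fun q => c q.1 q.2).sum ≤ B)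
    (hY : ∀ (x : V → V → ℝ) (p : V → ℝ),
      (∀ u v, 0 ≤ x u v) → (∀ u, 0 ≤ p u) →
      (∀ u v, ¬(c r u ≤ c r w ∧ c r v ≤ c r w ∧ u ≠ v) → x u v = 0) →
      (∀ S : Finset V, (∀ v ∈ S, c r v ≤ c r w) → r ∉ S → ∀ v ∈ S,
        1 ≤ (∑ u ∈ Sᶜ, ∑ z ∈ S, x u z) + p v) →
      (∀ v, v ≠ r → (∑ u, x v u) ≤ ∑ u, x u v) →
      Y ≤ (∑ u, ∑ v, c u v * x u v) +
        lam * ∑ v ∈ Finset.univ.filter (fun u => c r u ≤ c r w), π v * p v) :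
    ∑ v ∈ L.toFinset, π v ≤
      2 * (∑ v ∈ Finset.univ.filter fun u => c r u ≤ c r w, π v) - π r - π w
        + (B - 2 * Y) / lam := by
  classical
  -- rotate L so that it starts at r
  set n := L.idxOf r with hn
  have hnlt : n < L.length := List.idxOf_lt_length_iff.2 hrL
  set L' := L.rotate n with hL'def
  have hperm : List.Perm L' L := L.rotate_perm n
  have hnd' : L'.Nodup := hperm.nodup_iff.mpr hLnd
  have hfin : L'.toFinset = L.toFinset := by
    ext a; simp [List.mem_toFinset, hperm.mem_iff]
  have hmem' : ∀ v ∈ L', c r v ≤ c r w := fun v hv => hLVw v (hperm.subset hv)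
  have hcost' : ((L'.zip (L'.rotate 1)).map fun q => c q.1 q.2).sum ≤ B := by
    rw [hL'def, PCW.rotate_cycle_cost]; exact hLcost
  obtain ⟨T, hT⟩ : ∃ T, L' = r :: T := by
    have h0 : 0 < L'.length := by
      rw [hL'def, List.length_rotate]; omega
    have hget : L'[0]? = some r := by
      rw [hL'def] at h0 ⊢
      rw [List.getElem?_eq_getElem h0, List.getElem_rotate]
      simp only [Nat.zero_add, Nat.mod_eq_of_lt hnlt]
      rw [List.getElem_idxOf hnlt]
    cases hLL : L' with
    | nil => rw [hLL] at h0; simp at h0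
    | cons a t =>
      rw [hLL] at hget
      simp only [List.getElem?_cons_zero, Option.some.injEq] at hget
      exact ⟨t, by rw [hget]⟩
  have hwL' : w ∈ L' := hperm.mem_iff.2 hwL
  have hwT : w ∈ T := by
    rw [hT] at hwL'
    rcases List.mem_cons.1 hwL' with h | h
    · exact absurd h.symm hrw
    · exact h
  obtain ⟨T1, T2, hTsplit⟩ := List.append_of_mem hwT
  have hLsplit : L' = r :: (T1 ++ w :: T2) := by rw [hT, hTsplit]
  -- nodup facts
  have hndL : (r :: (T1 ++ w :: T2)).Nodup := hLsplit ▸ hnd'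
  have hrT12 : r ∉ T1 ++ w :: T2 := (List.nodup_cons.1 hndL).1
  have hndT12 : (T1 ++ w :: T2).Nodup := (List.nodup_cons.1 hndL).2
  have hrT1 : r ∉ T1 := fun h => hrT12 (List.mem_append_left _ h)
  have hrT2 : r ∉ T2 := fun h => hrT12 (List.mem_append_right _ (List.mem_cons_of_mem _ h))
  have hndT1 : T1.Nodup := hndT12.of_append_left
  have hndwT2 : (w :: T2).Nodup := hndT12.of_append_right
  have hwT2 : w ∉ T2 := (List.nodup_cons.1 hndwT2).1
  have hndT2 : T2.Nodup := (List.nodup_cons.1 hndwT2).2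
  have hdisj : List.Disjoint T1 (w :: T2) := List.disjoint_of_nodup_append hndT12
  have hwT1 : w ∉ T1 := fun h => hdisj h (List.mem_cons_self)
  -- the two paths
  set P1 : List V := r :: (T1 ++ [w]) with hP1def
  set Q : List V := w :: (T2 ++ [r]) with hQdef
  set P2 : List V := r :: (T2.reverse ++ [w]) with hP2def
  have hQrev : Q.reverse = P2 := by simp [hQdef, hP2def]
  have hnd1 : P1.Nodup := by
    rw [hP1def]
    simp only [List.nodup_cons, List.nodup_append, List.mem_append, List.mem_singleton,
      List.nodup_singleton, List.disjoint_singleton]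
    refine ⟨?_, hndT1, ?_, fun a ha b hb hab => by subst hab; subst hb; exact hwT1 ha⟩
    · rintro (h | h)
      · exact hrT1 h
      · exact hrw h
    · simp
  have hnd2 : P2.Nodup := by
    rw [hP2def]
    simp only [List.nodup_cons, List.nodup_append, List.mem_append, List.mem_singleton,
      List.nodup_singleton, List.disjoint_singleton, List.nodup_reverse, List.mem_reverse]
    refine ⟨?_, hndT2, ?_, fun a ha b hb hab => by subst hab; subst hb; exact hwT2 ha⟩
    · rintro (h | h)
      · exact hrT2 h
      · exact hrw h
    · simp
  have hsub1 : ∀ v ∈ P1, v ∈ L' := by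
    intro v hv
    rw [hLsplit]
    rw [hP1def] at hv
    simp only [List.mem_cons, List.mem_append, List.mem_singleton] at hv ⊢
    tauto
  have hsub2 : ∀ v ∈ P2, v ∈ L' := by
    intro v hv
    rw [hLsplit]
    rw [hP2def] at hv
    simp only [List.mem_cons, List.mem_append, List.mem_singleton, List.mem_reverse] at hv ⊢
    tauto
  have hcover : ∀ v ∈ L', v ∈ P1 ∨ v ∈ P2 := by
    intro v hv
    rw [hLsplit] at hv
    rw [hP1def, hP2def]
    simp only [List.mem_cons, List.mem_append, List.mem_singleton, List.mem_reverse] at hv ⊢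
    tauto
  have hwP1 : w ∈ P1 := by rw [hP1def]; simp
  have hwP2 : w ∈ P2 := by rw [hP2def]; simp
  -- the LP solution
  set x : V → V → ℝ := fun u v => PCW.flow P1 u v + PCW.flow P2 u v with hxdef
  set p : V → ℝ := fun v => if v = r ∨ v = w then 0 else
    if v ∈ L.toFinset then (2:ℝ)⁻¹ else 1 with hpdef
  have hxnn : ∀ u v, 0 ≤ x u v := fun u v =>
    add_nonneg (PCW.flow_nonneg _ u v) (PCW.flow_nonneg _ u v)
  have hpnn : ∀ u, 0 ≤ p u := by
    intro u; rw [hpdef]; dsimp only; split_ifs <;> norm_num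
  have hxsupp : ∀ u v, ¬(c r u ≤ c r w ∧ c r v ≤ c r w ∧ u ≠ v) → x u v = 0 := by
    intro u v h
    rw [hxdef]; dsimp only
    rw [PCW.flow_support P1 hnd1 u v, PCW.flow_support P2 hnd2 u v, add_zero]
    · rintro ⟨h1, h2, h3⟩
      exact h ⟨hmem' u (hsub2 u h1), hmem' v (hsub2 v h2), h3⟩
    · rintro ⟨h1, h2, h3⟩
      exact h ⟨hmem' u (hsub1 u h1), hmem' v (hsub1 v h2), h3⟩
  have hcut : ∀ S : Finset V, (∀ v ∈ S, c r v ≤ c r w) → r ∉ S → ∀ v ∈ S,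
      1 ≤ (∑ u ∈ Sᶜ, ∑ z ∈ S, x u z) + p v := by
    intro S hS hrS v hvS
    have hsplit : (∑ u ∈ Sᶜ, ∑ z ∈ S, x u z)
        = (∑ u ∈ Sᶜ, ∑ z ∈ S, PCW.flow P1 u z) + ∑ u ∈ Sᶜ, ∑ z ∈ S, PCW.flow P2 u z := by
      rw [hxdef]; simp [Finset.sum_add_distrib]
    have hnn1 : 0 ≤ ∑ u ∈ Sᶜ, ∑ z ∈ S, PCW.flow P1 u z :=
      Finset.sum_nonneg fun u _ => Finset.sum_nonneg fun z _ => PCW.flow_nonneg _ u z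
    have hnn2 : 0 ≤ ∑ u ∈ Sᶜ, ∑ z ∈ S, PCW.flow P2 u z :=
      Finset.sum_nonneg fun u _ => Finset.sum_nonneg fun z _ => PCW.flow_nonneg _ u z
    have hvr : v ≠ r := fun h => hrS (h ▸ hvS)
    by_cases hvw : v = w
    · subst hvw
      have hc1 : (2:ℝ)⁻¹ ≤ ∑ u ∈ Sᶜ, ∑ z ∈ S, PCW.flow P1 u z := by
        rw [hP1def]; exact PCW.flow_cut _ r S hrS v (hP1def ▸ hwP1) hvS
      have hc2 : (2:ℝ)⁻¹ ≤ ∑ u ∈ Sᶜ, ∑ z ∈ S, PCW.flow P2 u z := by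
        rw [hP2def]; exact PCW.flow_cut _ r S hrS v (hP2def ▸ hwP2) hvS
      have hp0 : 0 ≤ p v := hpnn v
      rw [hsplit]; linarith
    · by_cases hvL : v ∈ L.toFinset
      · have hpv : p v = (2:ℝ)⁻¹ := by
          rw [hpdef]; dsimp only
          rw [if_neg (by tauto), if_pos hvL]
        have hvL' : v ∈ L' := hperm.mem_iff.2 (List.mem_toFinset.1 hvL)
        rcases hcover v hvL' with h | h
        · have hc1 : (2:ℝ)⁻¹ ≤ ∑ u ∈ Sᶜ, ∑ z ∈ S, PCW.flow P1 u z := by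
            rw [hP1def]; exact PCW.flow_cut _ r S hrS v (hP1def ▸ h) hvS
          rw [hsplit, hpv]; linarith
        · have hc2 : (2:ℝ)⁻¹ ≤ ∑ u ∈ Sᶜ, ∑ z ∈ S, PCW.flow P2 u z := by
            rw [hP2def]; exact PCW.flow_cut _ r S hrS v (hP2def ▸ h) hvS
          rw [hsplit, hpv]; linarith
      · have hpv : p v = 1 := by
          rw [hpdef]; dsimp only
          rw [if_neg (by tauto), if_neg hvL]
        rw [hsplit, hpv]; linarith
  have hcons : ∀ v, v ≠ r → (∑ u, x v u) ≤ ∑ u, x u v := by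
    intro v hv
    rw [hxdef]
    dsimp only
    rw [Finset.sum_add_distrib, Finset.sum_add_distrib]
    have h1 := PCW.flow_conservation (T1 ++ [w]) r v (hP1def ▸ hnd1) hv
    have h2 := PCW.flow_conservation (T2.reverse ++ [w]) r v (hP2def ▸ hnd2) hv
    rw [hP1def, hP2def]
    exact add_le_add h1 h2
  have hYres := hY x p hxnn hpnn hxsupp hcut hcons
  -- cost bound
  have hcost1 : ∑ u, ∑ v, c u v * x u v
      = (2:ℝ)⁻¹ * (PCW.costsum c (PCW.edges P1) + PCW.costsum c (PCW.edges Q)) := by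
    rw [hxdef]
    dsimp only
    simp only [mul_add, Finset.sum_add_distrib]
    rw [PCW.flow_cost c P1, PCW.flow_cost c P2, ← hQrev, PCW.costsum_edges_reverse c hsym]
    try ring
  have hcostB : PCW.costsum c (PCW.edges P1) + PCW.costsum c (PCW.edges Q) ≤ B := by
    have hdecomp : PCW.edges (L' ++ [r]) = PCW.edges P1 ++ PCW.edges Q := by
      have h1 : L' ++ [r] = (r :: T1) ++ w :: (T2 ++ [r]) := by
        rw [hLsplit]; simp
      have h2 : P1 = (r :: T1) ++ [w] := by rw [hP1def]; simp
      have h3 : Q = w :: (T2 ++ [r]) := hQdef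
      rw [h1, PCW.edges_append, ← h2, ← h3]
    have hzip : L'.zip (L'.rotate 1) = PCW.edges (L' ++ [r]) := by
      rw [hT]
      rw [show (r :: T).rotate 1 = T ++ [r] by
        rw [List.rotate_cons_succ, List.rotate_zero]]
      exact PCW.zip_concat_eq_edges T r r
    have : PCW.costsum c (PCW.edges (L' ++ [r])) ≤ B := by
      rw [← hzip]; exact hcost'
    rw [hdecomp, PCW.costsum_append] at this
    exact this
  -- penalty computation
  set Sb := Finset.univ.filter (fun u => c r u ≤ c r w) with hSbdef
  set Lt := L.toFinset with hLtdef
  have hsubLt : Lt ⊆ Sb := by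
    intro v hv
    rw [hSbdef]
    simp only [Finset.mem_filter, Finset.mem_univ, true_and]
    exact hLVw v (List.mem_toFinset.1 hv)
  have hrLt : r ∈ Lt := List.mem_toFinset.2 hrL
  have hwLt : w ∈ Lt := List.mem_toFinset.2 hwL
  have hpairsub : ({r, w} : Finset V) ⊆ Lt := by
    intro v hv
    rcases Finset.mem_insert.1 hv with h | h
    · exact h ▸ hrLt
    · exact (Finset.mem_singleton.1 h) ▸ hwLt
  have epen : ∑ v ∈ Sb, π v * p v
      = ((∑ v ∈ Sb, π v) - ∑ v ∈ Lt, π v)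
        + (2:ℝ)⁻¹ * ((∑ v ∈ Lt, π v) - π r - π w) := by
    rw [← Finset.sum_sdiff hsubLt]
    have e2 : ∑ v ∈ Sb \ Lt, π v * p v = ∑ v ∈ Sb \ Lt, π v := by
      apply Finset.sum_congr rfl
      intro v hv
      have hvLt : v ∉ Lt := (Finset.mem_sdiff.1 hv).2
      have hpv : p v = 1 := by
        rw [hpdef]; dsimp only
        rw [if_neg, if_neg hvLt]
        rintro (h | h)
        · exact hvLt (h ▸ hrLt)
        · exact hvLt (h ▸ hwLt)
      rw [hpv, mul_one]
    have e4 : ∑ v ∈ Lt, π v * p v = (2:ℝ)⁻¹ * ((∑ v ∈ Lt, π v) - π r - π w) := by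
      rw [← Finset.sum_sdiff hpairsub]
      have e5 : ∑ v ∈ ({r, w} : Finset V), π v * p v = 0 := by
        rw [Finset.sum_pair hrw]
        have hpr : p r = 0 := by rw [hpdef]; dsimp only; rw [if_pos (Or.inl rfl)]
        have hpw : p w = 0 := by rw [hpdef]; dsimp only; rw [if_pos (Or.inr rfl)]
        rw [hpr, hpw]; ring
      have e6 : ∑ v ∈ Lt \ {r, w}, π v * p v = (2:ℝ)⁻¹ * ∑ v ∈ Lt \ {r, w}, π v := by
        rw [Finset.mul_sum]
        apply Finset.sum_congr rfl
        intro v hv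
        have h1 := Finset.mem_sdiff.1 hv
        have hvr : v ≠ r := fun h => (by simp [h] at h1)
        have hvw : v ≠ w := fun h => (by simp [h] at h1)
        have hpv : p v = (2:ℝ)⁻¹ := by
          rw [hpdef]; dsimp only
          rw [if_neg (by tauto), if_pos h1.1]
        rw [hpv]; ring
      have e7 : ∑ v ∈ Lt \ {r, w}, π v = (∑ v ∈ Lt, π v) - π r - π w := by
        have := Finset.sum_sdiff hpairsub (f := π)
        rw [Finset.sum_pair hrw] at this
        linarith
      rw [e5, e6, e7]; ring
    have e3 : ∑ v ∈ Sb \ Lt, π v = (∑ v ∈ Sb, π v) - ∑ v ∈ Lt, π v := by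
      have := Finset.sum_sdiff hsubLt (f := π)
      linarith
    rw [e2, e4, e3]
  -- final arithmetic
  have hfinal : Y ≤ B / 2 + lam * (((∑ v ∈ Sb, π v) - ∑ v ∈ Lt, π v)
      + (2:ℝ)⁻¹ * ((∑ v ∈ Lt, π v) - π r - π w)) := by
    rw [hcost1, epen] at hYres
    have hl := mul_le_mul_of_nonneg_left hcostB (by norm_num : (0:ℝ) ≤ (2:ℝ)⁻¹)
    linarith
  have hLtfin : ∑ v ∈ L.toFinset, π v = ∑ v ∈ Lt, π v := rfl
  rw [hLtfin]
  have hdiv : (-2:ℝ) * (((∑ v ∈ Sb, π v) - ∑ v ∈ Lt, π v)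
      + (2:ℝ)⁻¹ * ((∑ v ∈ Lt, π v) - π r - π w)) ≤ (B - 2 * Y) / lam := by
    rw [le_div_iff₀ hlam]
    nlinarith [hfinal]
  have hSbeq : ∑ v ∈ Finset.univ.filter (fun u => c r u ≤ c r w), π v = ∑ v ∈ Sb, π v := rfl
  rw [hSbeq]
  linarith [hdiv]
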